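/- Let X be a random field on [0,∞)² with self-similar covariance of index (H₁,H₂), H₁, H₂ ∈ (0,1), and with second-moment stationary rectangular increments. Then for all s = (s₁,s₂), t = (t₁,t₂) ∈ [0,∞)²: E[(X(t₁,t₂) − X(s₁,t₂))²] = |t₁ − s₁|^{2H₁}·t₂^{2H₂}·E[X(1,1)²], and E[(X(s₁,t₂) − X(s₁,s₂))²] = |t₂ − s₂|^{2H₂}·s₁^{2H₁}·E[X(1,1)²]. -/
import Mathlib


open MeasureTheory Real

/-- Lemma 1 of the paper, for fields with self-similar covariance and
second-moment stationary rectangular increments. -/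
theorem lemma1_increment_variances
    {Ω : Type*} [MeasurableSpace Ω] (P : Measure Ω) [IsProbabilityMeasure P]
    (H₁ H₂ : ℝ) (hH₁ : H₁ ∈ Set.Ioo (0:ℝ) 1) (hH₂ : H₂ ∈ Set.Ioo (0:ℝ) 1)
    (X : ℝ → ℝ → Ω → ℝ)
    (hL2 : ∀ t₁ t₂ : ℝ, 0 ≤ t₁ → 0 ≤ t₂ →
      Integrable (fun ω => (X t₁ t₂ ω) ^ 2) P)
    (hss : ∀ a₁ a₂ : ℝ, 0 < a₁ → 0 < a₂ →
      ∀ t₁ t₂ s₁ s₂ : ℝ, 0 ≤ t₁ → 0 ≤ t₂ → 0 ≤ s₁ → 0 ≤ s₂ →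
        ∫ ω, X (a₁ * t₁) (a₂ * t₂) ω * X (a₁ * s₁) (a₂ * s₂) ω ∂P
          = a₁ ^ (2 * H₁) * a₂ ^ (2 * H₂) * ∫ ω, X t₁ t₂ ω * X s₁ s₂ ω ∂P)
    (hsi : ∀ u₁ u₂ h₁ h₂ : ℝ, 0 ≤ u₁ → 0 ≤ u₂ → 0 ≤ h₁ → 0 ≤ h₂ →
      ∫ ω, (X (u₁ + h₁) (u₂ + h₂) ω - X u₁ (u₂ + h₂) ω
            - X (u₁ + h₁) u₂ ω + X u₁ u₂ ω) ^ 2 ∂P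
        = ∫ ω, (X h₁ h₂ ω - X 0 h₂ ω - X h₁ 0 ω + X 0 0 ω) ^ 2 ∂P) :
    ∀ t₁ t₂ s₁ s₂ : ℝ, 0 ≤ t₁ → 0 ≤ t₂ → 0 ≤ s₁ → 0 ≤ s₂ →
      (∫ ω, (X t₁ t₂ ω - X s₁ t₂ ω) ^ 2 ∂P
        = |t₁ - s₁| ^ (2 * H₁) * t₂ ^ (2 * H₂) * ∫ ω, (X 1 1 ω) ^ 2 ∂P)
      ∧ (∫ ω, (X s₁ t₂ ω - X s₁ s₂ ω) ^ 2 ∂P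
        = |t₂ - s₂| ^ (2 * H₂) * s₁ ^ (2 * H₁) * ∫ ω, (X 1 1 ω) ^ 2 ∂P) := by
  obtain ⟨hH₁0, hH₁1⟩ := hH₁
  obtain ⟨hH₂0, hH₂1⟩ := hH₂
  have h2H₁ : (0:ℝ) < 2 * H₁ := by linarith
  have h2H₂ : (0:ℝ) < 2 * H₂ := by linarith
  have hc₁ : (1:ℝ) < (2:ℝ) ^ (2 * H₁) := Real.one_lt_rpow_iff_of_pos two_pos |>.2 (Or.inl ⟨one_lt_two, h2H₁⟩)
  have hc₂ : (1:ℝ) < (2:ℝ) ^ (2 * H₂) := Real.one_lt_rpow_iff_of_pos two_pos |>.2 (Or.inl ⟨one_lt_two, h2H₂⟩)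
  -- X 0 h = 0 a.e.
  have hzero_h : ∀ h : ℝ, 0 ≤ h → ∀ᵐ ω ∂P, X 0 h ω = 0 := by
    intro h hh
    have h1 := hss 2 1 two_pos one_pos 0 h 0 h le_rfl hh le_rfl hh
    simp only [mul_zero, one_mul] at h1
    have hI : (∫ ω, X 0 h ω * X 0 h ω ∂P) = 0 := by
      rw [Real.one_rpow, mul_one] at h1
      nlinarith [h1]
    have hI' : (∫ ω, (X 0 h ω) ^ 2 ∂P) = 0 := by
      simp only [pow_two]; exact hI
    have hnn : 0 ≤ᵐ[P] fun ω => (X 0 h ω) ^ 2 := ae_of_all _ fun ω => sq_nonneg _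
    have := (integral_eq_zero_iff_of_nonneg_ae hnn (hL2 0 h le_rfl hh)).1 hI'
    filter_upwards [this] with ω hω
    have : (X 0 h ω) ^ 2 = 0 := hω
    nlinarith [sq_nonneg (X 0 h ω)]
  -- X h 0 = 0 a.e.
  have hzero_v : ∀ h : ℝ, 0 ≤ h → ∀ᵐ ω ∂P, X h 0 ω = 0 := by
    intro h hh
    have h1 := hss 1 2 one_pos two_pos h 0 h 0 hh le_rfl hh le_rfl
    simp only [mul_zero, one_mul] at h1
    have hI : (∫ ω, X h 0 ω * X h 0 ω ∂P) = 0 := by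
      rw [Real.one_rpow, one_mul] at h1
      nlinarith [h1]
    have hI' : (∫ ω, (X h 0 ω) ^ 2 ∂P) = 0 := by
      simp only [pow_two]; exact hI
    have hnn : 0 ≤ᵐ[P] fun ω => (X h 0 ω) ^ 2 := ae_of_all _ fun ω => sq_nonneg _
    have := (integral_eq_zero_iff_of_nonneg_ae hnn (hL2 h 0 hh le_rfl)).1 hI'
    filter_upwards [this] with ω hω
    have : (X h 0 ω) ^ 2 = 0 := hω
    nlinarith [sq_nonneg (X h 0 ω)]
  -- variance of a single point
  have hsq : ∀ h₁ h₂ : ℝ, 0 ≤ h₁ → 0 ≤ h₂ →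
      (∫ ω, (X h₁ h₂ ω) ^ 2 ∂P)
        = h₁ ^ (2 * H₁) * h₂ ^ (2 * H₂) * ∫ ω, (X 1 1 ω) ^ 2 ∂P := by
    intro h₁ h₂ hh₁ hh₂
    rcases eq_or_lt_of_le hh₁ with h1eq | h1pos
    · have hz := hzero_h h₂ hh₂
      have : (∫ ω, (X h₁ h₂ ω) ^ 2 ∂P) = ∫ ω, (0:ℝ) ∂P := by
        apply integral_congr_ae
        filter_upwards [hz] with ω hω
        rw [← h1eq, hω]; ring
      rw [this, integral_zero, ← h1eq, Real.zero_rpow (ne_of_gt h2H₁)]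
      ring
    rcases eq_or_lt_of_le hh₂ with h2eq | h2pos
    · have hz := hzero_v h₁ hh₁
      have : (∫ ω, (X h₁ h₂ ω) ^ 2 ∂P) = ∫ ω, (0:ℝ) ∂P := by
        apply integral_congr_ae
        filter_upwards [hz] with ω hω
        rw [← h2eq, hω]; ring
      rw [this, integral_zero, ← h2eq, Real.zero_rpow (ne_of_gt h2H₂)]
      ring
    have h1 := hss h₁ h₂ h1pos h2pos 1 1 1 1 zero_le_one zero_le_one zero_le_one zero_le_one
    simp only [mul_one] at h1
    have e1 : (∫ ω, (X h₁ h₂ ω) ^ 2 ∂P) = ∫ ω, X h₁ h₂ ω * X h₁ h₂ ω ∂P := by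
      congr 1; funext ω; ring
    have e2 : (∫ ω, (X 1 1 ω) ^ 2 ∂P) = ∫ ω, X 1 1 ω * X 1 1 ω ∂P := by
      congr 1; funext ω; ring
    rw [e1, e2, h1]
  -- horizontal increments
  have key₁ : ∀ u d t₂ : ℝ, 0 ≤ u → 0 ≤ d → 0 ≤ t₂ →
      (∫ ω, (X (u + d) t₂ ω - X u t₂ ω) ^ 2 ∂P)
        = d ^ (2 * H₁) * t₂ ^ (2 * H₂) * ∫ ω, (X 1 1 ω) ^ 2 ∂P := by
    intro u d t₂ hu hd ht₂
    have h1 := hsi u 0 d t₂ hu le_rfl hd ht₂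
    simp only [zero_add] at h1
    have eL : (∫ ω, (X (u + d) t₂ ω - X u t₂ ω - X (u + d) 0 ω + X u 0 ω) ^ 2 ∂P)
        = ∫ ω, (X (u + d) t₂ ω - X u t₂ ω) ^ 2 ∂P := by
      apply integral_congr_ae
      filter_upwards [hzero_v (u + d) (by linarith), hzero_v u hu] with ω h1 h2
      rw [h1, h2]; ring
    have eR : (∫ ω, (X d t₂ ω - X 0 t₂ ω - X d 0 ω + X 0 0 ω) ^ 2 ∂P)
        = ∫ ω, (X d t₂ ω) ^ 2 ∂P := by
      apply integral_congr_ae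
      filter_upwards [hzero_h t₂ ht₂, hzero_v d hd, hzero_h 0 le_rfl] with ω h1 h2 h3
      rw [h1, h2, h3]; ring
    rw [← eL, h1, eR, hsq d t₂ hd ht₂]
  -- vertical increments
  have key₂ : ∀ s₁ u d : ℝ, 0 ≤ s₁ → 0 ≤ u → 0 ≤ d →
      (∫ ω, (X s₁ (u + d) ω - X s₁ u ω) ^ 2 ∂P)
        = d ^ (2 * H₂) * s₁ ^ (2 * H₁) * ∫ ω, (X 1 1 ω) ^ 2 ∂P := by
    intro s₁ u d hs₁ hu hd
    have h1 := hsi 0 u s₁ d le_rfl hu hs₁ hd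
    simp only [zero_add] at h1
    have eL : (∫ ω, (X s₁ (u + d) ω - X 0 (u + d) ω - X s₁ u ω + X 0 u ω) ^ 2 ∂P)
        = ∫ ω, (X s₁ (u + d) ω - X s₁ u ω) ^ 2 ∂P := by
      apply integral_congr_ae
      filter_upwards [hzero_h (u + d) (by linarith), hzero_h u hu] with ω h1 h2
      rw [h1, h2]; ring
    have eR : (∫ ω, (X s₁ d ω - X 0 d ω - X s₁ 0 ω + X 0 0 ω) ^ 2 ∂P)
        = ∫ ω, (X s₁ d ω) ^ 2 ∂P := by
      apply integral_congr_ae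
      filter_upwards [hzero_h d hd, hzero_v s₁ hs₁, hzero_h 0 le_rfl] with ω h1 h2 h3
      rw [h1, h2, h3]; ring
    rw [← eL, h1, eR, hsq s₁ d hs₁ hd]
    ring
  intro t₁ t₂ s₁ s₂ ht₁ ht₂ hs₁ hs₂
  constructor
  · rcases le_total s₁ t₁ with hle | hle
    · have := key₁ s₁ (t₁ - s₁) t₂ hs₁ (by linarith) ht₂
      rw [show s₁ + (t₁ - s₁) = t₁ by ring] at this
      rw [this, abs_of_nonneg (by linarith : (0:ℝ) ≤ t₁ - s₁)]
    · have := key₁ t₁ (s₁ - t₁) t₂ ht₁ (by linarith) ht₂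
      rw [show t₁ + (s₁ - t₁) = s₁ by ring] at this
      have e : (∫ ω, (X t₁ t₂ ω - X s₁ t₂ ω) ^ 2 ∂P)
          = ∫ ω, (X s₁ t₂ ω - X t₁ t₂ ω) ^ 2 ∂P := by
        congr 1; funext ω; ring
      rw [e, this, abs_of_nonpos (by linarith : t₁ - s₁ ≤ 0)]
      norm_num
  · rcases le_total s₂ t₂ with hle | hle
    · have := key₂ s₁ s₂ (t₂ - s₂) hs₁ hs₂ (by linarith)
      rw [show s₂ + (t₂ - s₂) = t₂ by ring] at this
      rw [this, abs_of_nonneg (by linarith : (0:ℝ) ≤ t₂ - s₂)]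
    · have := key₂ s₁ t₂ (s₂ - t₂) hs₁ ht₂ (by linarith)
      rw [show t₂ + (s₂ - t₂) = s₂ by ring] at this
      have e : (∫ ω, (X s₁ t₂ ω - X s₁ s₂ ω) ^ 2 ∂P)
          = ∫ ω, (X s₁ s₂ ω - X s₁ t₂ ω) ^ 2 ∂P := by
        congr 1; funext ω; ring
      rw [e, this, abs_of_nonpos (by linarith : t₂ - s₂ ≤ 0)]
      norm_num
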